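/- For each positive integer ρ, define α_c(ρ) := inf{α > 0 : there exists x ∈ [0,1] with x(1 − 2(1 − (1−x)²)^ρ) + 1 − 1/α > 0}. Then 0 < α_c(ρ) < 1 for every positive integer ρ, and the map ρ ↦ α_c(ρ) is strictly decreasing, i.e. α_c(ρ+1) < α_c(ρ) for every positive integer ρ. -/

import Mathlib

open Set

noncomputable def alphaC (ρ : ℕ) : ℝ :=
  sInf {α : ℝ | 0 < α ∧ ∃ x ∈ Set.Icc (0:ℝ) 1,
    x * (1 - 2 * (1 - (1 - x) ^ 2) ^ ρ) + 1 - 1 / α > 0}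

private noncomputable def gDAR (ρ : ℕ) (x : ℝ) : ℝ :=
  x * (1 - 2 * (1 - (1 - x) ^ 2) ^ ρ) + 1

private lemma gDAR_max (ρ : ℕ) :
    ∃ x₀ ∈ Icc (0:ℝ) 1, ∀ y ∈ Icc (0:ℝ) 1, gDAR ρ y ≤ gDAR ρ x₀ := by
  have hc : ContinuousOn (gDAR ρ) (Icc (0:ℝ) 1) := by unfold gDAR; fun_prop
  obtain ⟨x₀, hx₀, hmax⟩ := isCompact_Icc.exists_isMaxOn
    (by norm_num : (Icc (0:ℝ) 1).Nonempty) hc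
  exact ⟨x₀, hx₀, fun y hy => hmax hy⟩

private lemma gDAR_big {ρ : ℕ} (hρ : 1 ≤ ρ) : 1 < gDAR ρ (1/5) := by
  have h1 : ((9:ℝ)/25) ^ ρ ≤ ((9:ℝ)/25) ^ 1 :=
    pow_le_pow_of_le_one (by norm_num) (by norm_num) hρ
  have h2 : (1 - (1 - (1:ℝ)/5) ^ 2) = 9/25 := by norm_num
  unfold gDAR
  rw [h2]
  nlinarith [h1]

private lemma alphaC_eq {ρ : ℕ} {x₀ : ℝ} (hx₀ : x₀ ∈ Icc (0:ℝ) 1)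
    (hmax : ∀ y ∈ Icc (0:ℝ) 1, gDAR ρ y ≤ gDAR ρ x₀) (hM : 1 < gDAR ρ x₀) :
    alphaC ρ = 1 / gDAR ρ x₀ := by
  have hMpos : 0 < gDAR ρ x₀ := by linarith
  have hset : {α : ℝ | 0 < α ∧ ∃ x ∈ Set.Icc (0:ℝ) 1,
      x * (1 - 2 * (1 - (1 - x) ^ 2) ^ ρ) + 1 - 1 / α > 0} = Ioi (1 / gDAR ρ x₀) := by
    ext α
    simp only [mem_setOf_eq, mem_Ioi]
    constructor
    · rintro ⟨hα, x, hx, hgt⟩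
      have hgx : 1/α < gDAR ρ x := by unfold gDAR; linarith
      have hle := hmax x hx
      have h1 : 1/α < gDAR ρ x₀ := lt_of_lt_of_le hgx hle
      rw [div_lt_iff₀ hα] at h1
      rw [div_lt_iff₀ hMpos]
      nlinarith
    · intro h
      have hα : 0 < α := lt_trans (by positivity) h
      refine ⟨hα, x₀, hx₀, ?_⟩
      have h1 : 1/α < gDAR ρ x₀ := by
        rw [div_lt_iff₀ hMpos] at h
        rw [div_lt_iff₀ hα]
        nlinarith
      unfold gDAR at h1
      linarith
  unfold alphaC
  rw [hset, csInf_Ioi]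

theorem alphaC_in_unit_interval_and_strict_anti :
    ∀ ρ : ℕ, 1 ≤ ρ → (0 < alphaC ρ ∧ alphaC ρ < 1) ∧ alphaC (ρ + 1) < alphaC ρ := by
  intro ρ hρ
  obtain ⟨x₀, hx₀, hmax₀⟩ := gDAR_max ρ
  obtain ⟨x₁, hx₁, hmax₁⟩ := gDAR_max (ρ + 1)
  have hM₀ : 1 < gDAR ρ x₀ :=
    lt_of_lt_of_le (gDAR_big hρ) (hmax₀ (1/5) (by norm_num))
  have hM₁ : 1 < gDAR (ρ + 1) x₁ :=
    lt_of_lt_of_le (gDAR_big (by omega)) (hmax₁ (1/5) (by norm_num))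
  have e₀ := alphaC_eq hx₀ hmax₀ hM₀
  have e₁ := alphaC_eq hx₁ hmax₁ hM₁
  have hx0pos : 0 < x₀ := by
    rcases lt_or_eq_of_le hx₀.1 with h | h
    · exact h
    · exfalso
      have : gDAR ρ x₀ = 1 := by unfold gDAR; rw [← h]; ring
      linarith
  have hx0lt : x₀ < 1 := by
    rcases lt_or_eq_of_le hx₀.2 with h | h
    · exact h
    · exfalso
      have : gDAR ρ x₀ = 0 := by unfold gDAR; rw [h]; norm_num
      linarith
  have hu0 : 0 < 1 - (1 - x₀) ^ 2 := by nlinarith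
  have hu1 : 1 - (1 - x₀) ^ 2 < 1 := by nlinarith
  have hpow : (1 - (1 - x₀) ^ 2) ^ (ρ + 1) < (1 - (1 - x₀) ^ 2) ^ ρ :=
    pow_lt_pow_right_of_lt_one₀ hu0 hu1 (Nat.lt_succ_self ρ)
  have hg : gDAR ρ x₀ < gDAR (ρ + 1) x₀ := by
    unfold gDAR; nlinarith
  have hle : gDAR (ρ + 1) x₀ ≤ gDAR (ρ + 1) x₁ := hmax₁ x₀ hx₀
  refine ⟨⟨?_, ?_⟩, ?_⟩
  · rw [e₀]; positivity
  · rw [e₀, div_lt_one (by linarith)]; linarith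
  · rw [e₀, e₁]
    exact one_div_lt_one_div_of_lt (by linarith) (by linarith)
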